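/- Let n ≥ 2 and ℓ ≥ 1 be fixed integers, and let 𝓕 be the set of ALL degree-n fields. If there exist a real α ≥ 1, an unbounded increasing sequence of exponents k_j → ∞, and constants c_j > 0 such that for all real X ≥ 1 one has ∑_{K ∈ 𝓕(X)} |Cl_K[ℓ]|^{k_j} ≤ c_j · |𝓕(X)|^α for every j, then for every ε > 0 there exists c_ε > 0 such that every degree-n field K satisfies |Cl_K[ℓ]| ≤ c_ε · D_K^ε. -/

import Mathlib

open NumberField Filter

-- The absolute value of the discriminant of an intermediate field `K` of `ℚ̄/ℚ`
-- (junk value `0` in the irrelevant case that `K/ℚ` is infinite-dimensional).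
open scoped Classical in
noncomputable def absDisc (K : IntermediateField ℚ (AlgebraicClosure ℚ)) : ℕ :=
  if h : FiniteDimensional ℚ K then
    letI : NumberField K := { to_charZero := inferInstance, to_finiteDimensional := h }
    (NumberField.discr K).natAbs
  else 0

/-- The cardinality `|Cl_K[m]|` of the `m`-torsion subgroup of the class group of `K`. -/
noncomputable def clTors (K : IntermediateField ℚ (AlgebraicClosure ℚ)) (m : ℕ) : ℕ :=
  Nat.card {x : ClassGroup (𝓞 K) // x ^ m = 1}

section MomentsAux

open Polynomial Module NumberField.InfinitePlace NumberField.mixedEmbedding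
  NumberField.hermiteTheorem
open scoped IntermediateField NNReal

/-- Abbreviation for the fixed algebraic closure of `ℚ`. -/
abbrev Qbar := AlgebraicClosure ℚ

lemma absDisc_eq (K : IntermediateField ℚ Qbar) [FiniteDimensional ℚ K] [NumberField K] :
    absDisc K = (discr K).natAbs := by
  rw [absDisc, dif_pos ‹FiniteDimensional ℚ K›]


/-- set of polynomials with bounded degree and coefficients -/
def polySet (n C : ℕ) : Set (Polynomial ℤ) :=
  {f | f.natDegree ≤ n ∧ ∀ i, f.coeff i ∈ Finset.Icc (-(C : ℤ)) (C : ℤ)}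

lemma polySet_finite (n C : ℕ) : (polySet n C).Finite ∧ (polySet n C).ncard ≤ (2*C+1)^(n+1) := by
  classical
  set g : polySet n C → (Fin (n+1) → (Finset.Icc (-(C : ℤ)) (C : ℤ))) :=
    fun f i => ⟨f.1.coeff i, f.2.2 i⟩ with hg
  have hinj : Function.Injective g := by
    rintro ⟨f, hf⟩ ⟨f', hf'⟩ h
    refine Subtype.ext ((Polynomial.ext_iff_natDegree_le hf.1 hf'.1).2 fun i hi => ?_)
    have := congrFun h ⟨i, Nat.lt_succ_of_le hi⟩
    exact Subtype.ext_iff.mp this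
  have hfin : Finite (polySet n C) := Finite.of_injective g hinj
  constructor
  · exact Set.finite_coe_iff.mp hfin
  · have h1 : Nat.card (polySet n C) ≤ Nat.card (Fin (n+1) → (Finset.Icc (-(C : ℤ)) (C : ℤ))) :=
      Nat.card_le_card_of_injective g hinj
    rw [Nat.card_coe_set_eq] at h1
    refine h1.trans ?_
    rw [Nat.card_eq_fintype_card, Fintype.card_fun, Fintype.card_coe, Int.card_Icc,
      Fintype.card_fin]
    have : ((C:ℤ) + 1 - -(C:ℤ)).toNat = 2*C+1 := by omega
    rw [this]

noncomputable def genSet (n C : ℕ) : Set Qbar := ⋃ f ∈ polySet n C, f.rootSet Qbar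


lemma genSet_finite (n C : ℕ) :
    (genSet n C).Finite ∧ (genSet n C).ncard ≤ (2*C+1)^(n+1) * n := by
  classical
  obtain ⟨hfin, hcard⟩ := polySet_finite n C
  have hEq : genSet n C = ↑(hfin.toFinset.biUnion fun f => (f.aroots Qbar).toFinset) := by
    ext x
    simp only [genSet, Set.mem_iUnion, Finset.coe_biUnion, Set.mem_iUnion, Finset.mem_coe,
      Multiset.mem_toFinset, Set.Finite.mem_toFinset, rootSet, Finset.mem_biUnion]
  rw [hEq]
  refine ⟨(Finset.finite_toSet _), ?_⟩
  rw [Set.ncard_coe_finset]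
  refine (Finset.card_biUnion_le).trans ?_
  refine (Finset.sum_le_card_nsmul _ _ n fun f hf => ?_).trans ?_
  · refine (Multiset.toFinset_card_le _).trans ?_
    refine (Polynomial.card_roots' _).trans ?_
    refine (Polynomial.natDegree_map_le).trans ?_
    exact (hfin.mem_toFinset.mp hf).1
  · rw [smul_eq_mul]
    rw [show hfin.toFinset.card = (polySet n C).ncard from (Set.ncard_eq_toFinset_card _ hfin).symm]
    exact Nat.mul_le_mul_right n hcard

lemma exists_gen (K : IntermediateField ℚ Qbar) [NumberField K] (N n : ℕ)
    (hKn : finrank ℚ K = n) (hKd : |discr K| ≤ (N : ℤ)) :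
    ∃ x ∈ genSet n (Nat.ceil ((max (Real.sqrt (1 + ((boundOfDiscBdd N : ℝ≥0) : ℝ)^2)) 1) ^ n
      * (n.choose (n/2) : ℝ))), K = ℚ⟮x⟯ := by
  set B := boundOfDiscBdd N with hB
  set B' : ℝ := max (Real.sqrt (1 + ((B : ℝ≥0) : ℝ)^2)) 1 with hB'
  have hB'1 : (1 : ℝ) ≤ B' := le_max_right _ _
  have hBle : ((B : ℝ≥0) : ℝ) ≤ B' := by
    refine le_trans ?_ (le_max_left _ _)
    nlinarith [Real.sq_sqrt (by positivity : (0:ℝ) ≤ 1 + ((B:ℝ≥0):ℝ)^2),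
      Real.sqrt_nonneg (1 + ((B:ℝ≥0):ℝ)^2), NNReal.coe_nonneg (B : ℝ≥0)]
  -- find a primitive algebraic integer with all places bounded by B'
  obtain ⟨a, ha, hbd⟩ : ∃ a : 𝓞 K, ℚ⟮(a : K)⟯ = ⊤ ∧ ∀ w : InfinitePlace K, w a ≤ B' := by
    obtain ⟨w₀⟩ := (inferInstance : Nonempty (InfinitePlace K))
    by_cases hw₀ : IsReal w₀
    · have hmk : minkowskiBound K ↑1 < convexBodyLTFactor K * B := by
        calc minkowskiBound K 1 < B := minkowskiBound_lt_boundOfDiscBdd hKd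
          _ = 1 * B := by rw [one_mul]
          _ ≤ convexBodyLTFactor K * B := by
              gcongr
              exact mod_cast one_le_convexBodyLTFactor K
      obtain ⟨a, ha, hle⟩ := exists_primitive_element_lt_of_isReal K hw₀ hmk
      refine ⟨a, ha, fun w => (hle w).le.trans ?_⟩
      push_cast
      exact max_le (hBle) hB'1
    · have hmk : minkowskiBound K ↑1 < convexBodyLT'Factor K * B := by
        calc minkowskiBound K 1 < B := minkowskiBound_lt_boundOfDiscBdd hKd
          _ = 1 * B := by rw [one_mul]
          _ ≤ convexBodyLT'Factor K * B := by
              gcongr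
              exact mod_cast one_le_convexBodyLT'Factor K
      obtain ⟨a, ha, hle⟩ := exists_primitive_element_lt_of_isComplex K
        (not_isReal_iff_isComplex.mp hw₀) hmk
      refine ⟨a, ha, fun w => (hle w).le.trans ?_⟩
      push_cast
      exact le_max_left _ _
  have hx := a.isIntegral_coe
  have hdeg : (minpoly ℤ (a : K)).natDegree ≤ n := by
    have h := ha
    rw [Field.primitive_element_iff_minpoly_natDegree_eq,
      minpoly.isIntegrallyClosed_eq_field_fractions' ℚ hx,
      (minpoly.monic hx).natDegree_map] at h
    exact (h.trans hKn).le
  refine ⟨algebraMap K Qbar (a : K), ?_, ?_⟩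
  · rw [genSet]
    simp_rw [Set.mem_iUnion]
    refine ⟨minpoly ℤ (a : K), ⟨hdeg, fun i => ?_⟩, ?_⟩
    · rw [Finset.mem_Icc, ← abs_le, ← @Int.cast_le ℝ]
      have hnorm : ∀ φ : K →+* ℂ, ‖φ (a : K)‖ ≤ B' := (le_iff_le (a : K) _).mp hbd
      refine (Eq.trans_le ?_ <| Embeddings.coeff_bdd_of_norm_le hnorm i).trans ?_
      · rw [minpoly.isIntegrallyClosed_eq_field_fractions' ℚ hx, coeff_map, eq_intCast,
          Int.norm_cast_rat, Int.norm_eq_abs, Int.cast_abs]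
        rfl
      · rw [max_eq_left hB'1, hKn]
        exact Nat.le_ceil _
    · refine mem_rootSet.mpr ⟨minpoly.ne_zero hx, ?_⟩
      exact (aeval_algebraMap_eq_zero_iff Qbar (a : K) _).mpr (minpoly.aeval ℤ (a : K))
  · replace ha := congrArg (IntermediateField.lift (F := K)) ha
    rw [eq_comm] at ha
    convert ha
    · exact (IntermediateField.lift_top (K := K)).symm
    · exact (IntermediateField.lift_adjoin_simple (K := K) _ _).symm

lemma ncard_le_of_gen {S : Set (IntermediateField ℚ Qbar)} {T : Set Qbar} (hT : T.Finite)
    (h : ∀ K ∈ S, ∃ x ∈ T, K = ℚ⟮x⟯) : S.Finite ∧ S.ncard ≤ T.ncard := by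
  haveI := hT.to_subtype
  classical
  set g : S → T := fun K => ⟨(h K K.2).choose, (h K K.2).choose_spec.1⟩ with hg
  have hinj : Function.Injective g := by
    rintro K K' hKK'
    have h1 := (h K K.2).choose_spec.2
    have h2 := (h K' K'.2).choose_spec.2
    apply Subtype.ext
    rw [h1, h2]
    exact congrArg (fun x : Qbar => (ℚ⟮x⟯ : IntermediateField ℚ Qbar)) (Subtype.ext_iff.mp hKK')
  have : Finite S := Finite.of_injective g hinj
  refine ⟨Set.finite_coe_iff.mp this, ?_⟩
  rw [← Nat.card_coe_set_eq, ← Nat.card_coe_set_eq]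
  exact Nat.card_le_card_of_injective g hinj

lemma boundOfDiscBdd_le (N : ℕ) (hN : 1 ≤ N) :
    ((boundOfDiscBdd N : ℝ≥0) : ℝ) ≤ 6 * (N : ℝ)^2 := by
  have hN1 : (1:ℝ) ≤ (N:ℝ) := by exact_mod_cast hN
  have hcoe : ((boundOfDiscBdd N : ℝ≥0) : ℝ)
      = Real.sqrt N * 2 ^ (rankOfDiscrBdd N) + 1 := by
    simp only [boundOfDiscBdd]
    push_cast [Real.coe_sqrt]
    ring
  rw [hcoe]
  set R := rankOfDiscrBdd N with hR
  have hpow : (2:ℝ) ^ R ≤ 5 * N := by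
    set L : ℝ := Real.log ((9/4 : ℝ) * N) / Real.log (3 * Real.pi / 4) with hL
    have hpi : (2:ℝ) ≤ 3 * Real.pi / 4 := by nlinarith [Real.pi_gt_three]
    have hlog2 : (0:ℝ) < Real.log 2 := Real.log_pos (by norm_num)
    have hlogpi : Real.log 2 ≤ Real.log (3 * Real.pi / 4) :=
      Real.log_le_log (by norm_num) hpi
    have hnum : (0:ℝ) ≤ Real.log ((9/4 : ℝ) * N) := Real.log_nonneg (by nlinarith)
    have hL0 : 0 ≤ L := div_nonneg hnum (hlogpi.trans' hlog2.le)
    have hRle : (R : ℝ) ≤ 1 + L := by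
      rw [hR, rankOfDiscrBdd]
      push_cast
      refine max_le (by linarith) ?_
      refine le_trans (Nat.floor_le hL0) (by linarith)
    calc (2:ℝ) ^ R = (2:ℝ) ^ (R : ℝ) := by rw [Real.rpow_natCast]
      _ ≤ (2:ℝ) ^ (1 + L) := Real.rpow_le_rpow_of_exponent_le one_le_two hRle
      _ ≤ (2:ℝ) ^ (1 + Real.log ((9/4 : ℝ) * N) / Real.log 2) := by
          refine Real.rpow_le_rpow_of_exponent_le one_le_two ?_
          have hpos : (0:ℝ) < Real.log (3 * Real.pi / 4) := lt_of_lt_of_le hlog2 hlogpi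
          have : L ≤ Real.log ((9/4 : ℝ) * N) / Real.log 2 := by
            rw [hL, div_le_div_iff₀ hpos hlog2]
            exact mul_le_mul_of_nonneg_left hlogpi hnum
          linarith
      _ = 2 * (2:ℝ) ^ (Real.logb 2 ((9/4 : ℝ) * N)) := by
          rw [Real.rpow_add (by norm_num), Real.rpow_one, Real.logb]
      _ = 2 * ((9/4 : ℝ) * N) := by
          rw [Real.rpow_logb (by norm_num) (by norm_num) (by nlinarith)]
      _ ≤ 5 * N := by nlinarith
  have hsqrt : Real.sqrt N ≤ (N:ℝ) := by
    nlinarith [Real.sq_sqrt (by positivity : (0:ℝ) ≤ (N:ℝ)), Real.sqrt_nonneg (N:ℝ)]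
  nlinarith [Real.sqrt_nonneg (N:ℝ), pow_nonneg (by norm_num : (0:ℝ) ≤ 2) R]

set_option maxHeartbeats 1000000 in
lemma field_count (n : ℕ) (hn : 2 ≤ n) :
    ∃ Cc : ℝ, 0 < Cc ∧ ∀ X : ℝ, 1 ≤ X →
      ({K : IntermediateField ℚ (AlgebraicClosure ℚ) |
          Module.finrank ℚ K = n ∧ (absDisc K : ℝ) ≤ X}).Finite ∧
      ((({K : IntermediateField ℚ (AlgebraicClosure ℚ) |
          Module.finrank ℚ K = n ∧ (absDisc K : ℝ) ≤ X}).ncard : ℝ)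
        ≤ Cc * X ^ (2*n*(n+1))) := by
  set ch : ℝ := (n.choose (n/2) : ℝ) with hch
  have hch1 : (1:ℝ) ≤ ch := by
    rw [hch]
    exact_mod_cast Nat.one_le_iff_ne_zero.mpr (Nat.choose_pos (Nat.div_le_self n 2)).ne'
  set M : ℝ := (2*ch+3) * 7^n with hM
  have hM1 : (1:ℝ) ≤ M := by
    rw [hM]
    have : (1:ℝ) ≤ 7^n := one_le_pow₀ (by norm_num)
    nlinarith
  refine ⟨(n : ℝ) * M^(n+1) * 2^(2*n*(n+1)), by positivity, fun X hX => ?_⟩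
  set N : ℕ := ⌈X⌉₊ with hN
  have hN1 : 1 ≤ N := Nat.one_le_iff_ne_zero.mpr (by
    simp only [hN, ne_eq, Nat.ceil_eq_zero, not_le]
    linarith)
  have hNR1 : (1:ℝ) ≤ (N:ℝ) := by exact_mod_cast hN1
  have hNX : (N:ℝ) ≤ 2*X := by
    have := Nat.ceil_lt_add_one (by linarith : (0:ℝ) ≤ X)
    rw [← hN] at this
    linarith
  set B' : ℝ := max (Real.sqrt (1 + ((boundOfDiscBdd N : ℝ≥0) : ℝ)^2)) 1 with hB'
  set C : ℕ := Nat.ceil (B' ^ n * ch) with hC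
  -- every field in the family is generated by an element of `genSet n C`
  have hgen : ∀ K ∈ {K : IntermediateField ℚ (AlgebraicClosure ℚ) |
      Module.finrank ℚ K = n ∧ (absDisc K : ℝ) ≤ X}, ∃ x ∈ genSet n C, K = ℚ⟮x⟯ := by
    rintro K ⟨hK1, hK2⟩
    haveI : FiniteDimensional ℚ K := FiniteDimensional.of_finrank_pos (by omega)
    haveI : NumberField K := ⟨⟩
    refine exists_gen K N n hK1 ?_
    rw [absDisc_eq] at hK2
    have : (discr K).natAbs ≤ N := by
      have : ((discr K).natAbs : ℝ) ≤ (N:ℝ) := le_trans hK2 (Nat.le_ceil X |>.trans (le_refl _))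
      exact_mod_cast this
    rw [Int.abs_eq_natAbs]
    exact_mod_cast this
  obtain ⟨hTfin, hTcard⟩ := genSet_finite n C
  obtain ⟨hSfin, hScard⟩ := ncard_le_of_gen hTfin hgen
  refine ⟨hSfin, ?_⟩
  -- now the numerics
  have hBle := boundOfDiscBdd_le N hN1
  have hB'le : B' ≤ 7 * (N:ℝ)^2 := by
    rw [hB']
    refine max_le ?_ (by nlinarith)
    have hB0 : (0:ℝ) ≤ ((boundOfDiscBdd N : ℝ≥0) : ℝ) := NNReal.coe_nonneg _
    have hsq : ((boundOfDiscBdd N : ℝ≥0) : ℝ)^2 ≤ (6 * (N:ℝ)^2)^2 :=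
      pow_le_pow_left₀ hB0 hBle 2
    have hN4 : (1:ℝ) ≤ ((N:ℝ)^2)^2 := one_le_pow₀ (one_le_pow₀ hNR1)
    have h1 : 1 + ((boundOfDiscBdd N : ℝ≥0) : ℝ)^2 ≤ (7 * (N:ℝ)^2)^2 := by nlinarith
    calc Real.sqrt (1 + ((boundOfDiscBdd N : ℝ≥0) : ℝ)^2) ≤ Real.sqrt ((7 * (N:ℝ)^2)^2) :=
          Real.sqrt_le_sqrt h1
      _ = 7 * (N:ℝ)^2 := Real.sqrt_sq (by positivity)
  have hB'0 : (0:ℝ) ≤ B' := le_trans zero_le_one (le_max_right _ _)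
  have hpow1 : (1:ℝ) ≤ (7 * (N:ℝ)^2)^n := one_le_pow₀ (by nlinarith)
  have hCle : (C:ℝ) ≤ (7 * (N:ℝ)^2)^n * ch + 1 := by
    rw [hC]
    have := Nat.ceil_lt_add_one (by positivity : (0:ℝ) ≤ B' ^ n * ch)
    have hmono : B' ^ n * ch ≤ (7 * (N:ℝ)^2)^n * ch := by
      have : B' ^ n ≤ (7 * (N:ℝ)^2)^n := pow_le_pow_left₀ hB'0 hB'le n
      nlinarith
    linarith
  have h2C : 2*(C:ℝ)+1 ≤ M * (N:ℝ)^(2*n) := by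
    have e1 : ((7:ℝ)*(N:ℝ)^2)^n = 7^n * ((N:ℝ)^(2*n)) := by
      rw [mul_pow, pow_mul]
    have : 2*(C:ℝ)+1 ≤ (2*ch+3) * (7 * (N:ℝ)^2)^n := by nlinarith
    rw [hM, mul_assoc, ← e1]
    linarith
  -- assemble
  have hcast : ((({K : IntermediateField ℚ (AlgebraicClosure ℚ) |
      Module.finrank ℚ K = n ∧ (absDisc K : ℝ) ≤ X}).ncard : ℝ))
      ≤ (2*(C:ℝ)+1)^(n+1) * n := by
    have h1 := le_trans hScard hTcard
    have : (((genSet n C).ncard : ℝ)) ≤ ((2*C+1)^(n+1) * n : ℕ) := by exact_mod_cast hTcard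
    calc ((({K : IntermediateField ℚ (AlgebraicClosure ℚ) |
        Module.finrank ℚ K = n ∧ (absDisc K : ℝ) ≤ X}).ncard : ℝ))
        ≤ (((2*C+1)^(n+1) * n : ℕ) : ℝ) := by exact_mod_cast h1
      _ = (2*(C:ℝ)+1)^(n+1) * n := by push_cast; ring
  refine hcast.trans ?_
  have hC0 : (0:ℝ) ≤ 2*(C:ℝ)+1 := by positivity
  calc (2*(C:ℝ)+1)^(n+1) * n ≤ (M * (N:ℝ)^(2*n))^(n+1) * n := by
        have := pow_le_pow_left₀ hC0 h2C (n+1)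
        have hn0 : (0:ℝ) ≤ (n:ℝ) := by positivity
        nlinarith
    _ = M^(n+1) * ((N:ℝ)^(2*n*(n+1))) * n := by
        rw [mul_pow, ← pow_mul]
    _ ≤ M^(n+1) * ((2*X)^(2*n*(n+1))) * n := by
        have : ((N:ℝ))^(2*n*(n+1)) ≤ (2*X)^(2*n*(n+1)) :=
          pow_le_pow_left₀ (by positivity) hNX _
        have hMp : (0:ℝ) ≤ M^(n+1) := by positivity
        exact mul_le_mul_of_nonneg_right (mul_le_mul_of_nonneg_left this hMp)
          (Nat.cast_nonneg n)
    _ = (n : ℝ) * M^(n+1) * 2^(2*n*(n+1)) * X ^ (2*n*(n+1)) := by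
        rw [mul_pow]
        ring

end MomentsAux

/-- Statement 0 for the family of ALL degree-`n` fields: uniform control of
arbitrarily high moments of `|Cl_K[ℓ]|` implies the `ℓ`-torsion conjecture in degree `n`. -/
theorem moments_imply_ell_torsion_conjecture
    (n ℓ : ℕ) (hn : 2 ≤ n) (hℓ : 1 ≤ ℓ)
    (α : ℝ) (hα : 1 ≤ α)
    (k : ℕ → ℝ) (hkmono : Monotone k)
    (hktop : Tendsto k atTop atTop)
    (c : ℕ → ℝ) (hc : ∀ j, 0 < c j)
    (hmom : ∀ j : ℕ, ∀ X : ℝ, 1 ≤ X →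
      ∑ᶠ K ∈ {K : IntermediateField ℚ (AlgebraicClosure ℚ) |
          Module.finrank ℚ K = n ∧ (absDisc K : ℝ) ≤ X}, (clTors K ℓ : ℝ) ^ (k j)
        ≤ c j * (({K : IntermediateField ℚ (AlgebraicClosure ℚ) |
          Module.finrank ℚ K = n ∧ (absDisc K : ℝ) ≤ X}).ncard : ℝ) ^ α) :
    ∀ ε : ℝ, 0 < ε → ∃ cε : ℝ, 0 < cε ∧
      ∀ K : IntermediateField ℚ (AlgebraicClosure ℚ), Module.finrank ℚ K = n →
        (clTors K ℓ : ℝ) ≤ cε * (absDisc K : ℝ) ^ ε := by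
  obtain ⟨Cc, hCc, hcount⟩ := field_count n hn
  set β : ℕ := 2*n*(n+1) with hβ
  intro ε hε
  obtain ⟨j, hj⟩ := (hktop.eventually_ge_atTop (max 1 (α*(β:ℝ)/ε))).exists
  have hkj1 : (1:ℝ) ≤ k j := le_trans (le_max_left _ _) hj
  have hkj0 : (0:ℝ) < k j := lt_of_lt_of_le zero_lt_one hkj1
  have hkjε : α*(β:ℝ)/ε ≤ k j := le_trans (le_max_right _ _) hj
  refine ⟨(c j) ^ (1/(k j)) * Cc ^ (α/(k j)),
    mul_pos (Real.rpow_pos_of_pos (hc j) _) (Real.rpow_pos_of_pos hCc _), fun K hK => ?_⟩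
  haveI : FiniteDimensional ℚ K := FiniteDimensional.of_finrank_pos (by omega)
  haveI : NumberField K := ⟨⟩
  have hD1 : (1:ℝ) ≤ (absDisc K : ℝ) := by
    have : absDisc K ≠ 0 := by
      rw [absDisc_eq]
      simpa using discr_ne_zero (K := K)
    exact_mod_cast Nat.one_le_iff_ne_zero.mpr this
  set D : ℝ := (absDisc K : ℝ) with hD
  have hD0 : (0:ℝ) ≤ D := by linarith
  obtain ⟨hfin, hcard⟩ := hcount D hD1
  -- single term is at most the sum
  have hmem : K ∈ {K : IntermediateField ℚ (AlgebraicClosure ℚ) |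
      Module.finrank ℚ K = n ∧ (absDisc K : ℝ) ≤ D} := ⟨hK, le_refl _⟩
  have hsingle : (clTors K ℓ : ℝ) ^ (k j) ≤
      ∑ᶠ K' ∈ {K : IntermediateField ℚ (AlgebraicClosure ℚ) |
        Module.finrank ℚ K = n ∧ (absDisc K : ℝ) ≤ D}, (clTors K' ℓ : ℝ) ^ (k j) := by
    rw [← hfin.coe_toFinset, finsum_mem_coe_finset]
    exact Finset.single_le_sum (f := fun K' => (clTors K' ℓ : ℝ) ^ (k j))
      (fun K' _ => Real.rpow_nonneg (Nat.cast_nonneg _) _)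
      (hfin.mem_toFinset.mpr hmem)
  have key : (clTors K ℓ : ℝ) ^ (k j) ≤ c j * (Cc * D ^ (β:ℝ)) ^ α := by
    refine (hsingle.trans (hmom j D hD1)).trans ?_
    have h1 : ((({K : IntermediateField ℚ (AlgebraicClosure ℚ) |
        Module.finrank ℚ K = n ∧ (absDisc K : ℝ) ≤ D}).ncard : ℝ)) ≤ Cc * D ^ (β:ℝ) := by
      rw [Real.rpow_natCast]
      exact hcard
    have h2 : ((({K : IntermediateField ℚ (AlgebraicClosure ℚ) |
        Module.finrank ℚ K = n ∧ (absDisc K : ℝ) ≤ D}).ncard : ℝ)) ^ α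
        ≤ (Cc * D ^ (β:ℝ)) ^ α :=
      Real.rpow_le_rpow (Nat.cast_nonneg _) h1 (by linarith)
    exact mul_le_mul_of_nonneg_left h2 (hc j).le
  -- extract the bound on `clTors`
  have ht0 : (0:ℝ) ≤ (clTors K ℓ : ℝ) := Nat.cast_nonneg _
  have hMpos : (0:ℝ) ≤ c j * (Cc * D ^ (β:ℝ)) ^ α :=
    mul_nonneg (hc j).le (Real.rpow_nonneg (by positivity) _)
  have hroot : (clTors K ℓ : ℝ) ≤ (c j * (Cc * D ^ (β:ℝ)) ^ α) ^ (1/(k j)) := by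
    have h := Real.rpow_le_rpow (Real.rpow_nonneg ht0 _) key
      (by positivity : (0:ℝ) ≤ 1/(k j))
    rwa [← Real.rpow_mul ht0, mul_one_div, div_self hkj0.ne', Real.rpow_one] at h
  have hexp : (β:ℝ) * (α/(k j)) ≤ ε := by
    have h1 : α*(β:ℝ) ≤ k j * ε := (div_le_iff₀ hε).mp hkjε
    rw [mul_div_assoc']
    exact (div_le_iff₀ hkj0).mpr (by nlinarith)
  have hDle : D ^ ((β:ℝ) * (α/(k j))) ≤ D ^ ε := Real.rpow_le_rpow_of_exponent_le hD1 hexp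
  calc (clTors K ℓ : ℝ)
      ≤ (c j * (Cc * D ^ (β:ℝ)) ^ α) ^ (1/(k j)) := hroot
    _ = (c j)^(1/(k j)) * (Cc ^ (α/(k j)) * D ^ ((β:ℝ) * (α/(k j)))) := by
        rw [Real.mul_rpow (hc j).le (Real.rpow_nonneg (by positivity) _),
          ← Real.rpow_mul (by positivity : (0:ℝ) ≤ Cc * D ^ (β:ℝ)),
          Real.mul_rpow hCc.le (Real.rpow_nonneg hD0 _),
          ← Real.rpow_mul hD0, mul_one_div]
    _ ≤ (c j)^(1/(k j)) * (Cc ^ (α/(k j)) * D ^ ε) := by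
        refine mul_le_mul_of_nonneg_left ?_ (Real.rpow_nonneg (hc j).le _)
        exact mul_le_mul_of_nonneg_left hDle (Real.rpow_nonneg hCc.le _)
    _ = (c j)^(1/(k j)) * Cc ^ (α/(k j)) * D ^ ε := by ring
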